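/- Let p and p + 2 both be primes with p odd. Let B be the set of ordered pairs (x, y) ∈ F_p × F_{p+2} such that either (x and y are both nonzero squares), or (x and y are both nonsquares), or y = 0. Then B is a difference set with parameters (p² + 2p, (p² + 2p − 1)/2, (p² + 2p − 3)/4) in the additive group Z_p × Z_{p+2}: |B| = (p² + 2p − 1)/2 and every nonzero element of Z_p × Z_{p+2} occurs exactly (p² + 2p − 3)/4 times as a difference a − b of two distinct elements a, b ∈ B. -/

import Mathlib

open Finset

set_option linter.unusedSectionVars false
set_option maxHeartbeats 1000000

section TwinAux

variable {K : Type} [Field K] [Fintype K] [DecidableEq K]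

local notation "c" => quadraticChar K

private lemma tpV_sq (x : K) : (c x : ℤ)^2 = if x = 0 then 0 else 1 := by
  by_cases h : x = 0
  · simp [h]
  · rw [if_neg h, quadraticChar_sq_one h]

private lemma tpV3 : ∑ x : K, (c x : ℤ)^2 = Fintype.card K - 1 := by
  have : ∀ x : K, (c x : ℤ)^2 = 1 - (if x = 0 then 1 else 0) := by
    intro x; rw [tpV_sq]; split <;> ring
  rw [Finset.sum_congr rfl fun x _ => this x, Finset.sum_sub_distrib,
    Finset.sum_ite_eq' Finset.univ (0:K) (fun _ => (1:ℤ))]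
  simp

private lemma tpVshift (f : K → ℤ) (a : K) : ∑ x : K, f (x - a) = ∑ x : K, f x :=
  Fintype.sum_equiv (Equiv.subRight a) _ _ (fun _ => rfl)

private lemma tpVcube (x : K) : (c x : ℤ)^2 * c x = c x := by
  by_cases h : x = 0
  · rw [h]; simp
  · rcases quadraticChar_dichotomy h with h1 | h1 <;> rw [h1] <;> ring

private lemma tpV4 (hK : ringChar K ≠ 2) : ∑ x : K, (c x : ℤ)^2 * c x = 0 := by
  rw [Finset.sum_congr rfl fun x _ => tpVcube x]
  exact quadraticChar_sum_zero hK

private lemma tpV12 (hK : ringChar K ≠ 2) (a : K) : ∑ x : K, (c (x - a) : ℤ) = 0 := by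
  rw [tpVshift (fun x => (c x : ℤ)) a]; exact quadraticChar_sum_zero hK

private lemma tpV9 (hK : ringChar K ≠ 2) (a : K) :
    ∑ x : K, (c x : ℤ)^2 * c (x - a) = -(c (-a)) := by
  have : ∀ x : K, (c x : ℤ)^2 * c (x - a) = c (x - a) - (if x = 0 then c (0 - a) else 0) := by
    intro x
    by_cases h : x = 0
    · rw [if_pos h, h]; simp
    · rw [if_neg h, quadraticChar_sq_one h]; ring
  rw [Finset.sum_congr rfl fun x _ => this x, Finset.sum_sub_distrib,
    Finset.sum_ite_eq' Finset.univ (0:K) (fun _ => (c (0 - a) : ℤ)), tpV12 hK]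
  simp

private lemma tpV10 (hK : ringChar K ≠ 2) (a : K) :
    ∑ x : K, (c x : ℤ) * (c (x - a))^2 = -(c a) := by
  have : ∀ x : K, (c x : ℤ) * (c (x - a))^2 = c x - (if x = a then c a else 0) := by
    intro x
    by_cases h : x = a
    · rw [if_pos h, h]; simp
    · rw [if_neg h, tpV_sq, if_neg (sub_ne_zero.mpr h)]; ring
  rw [Finset.sum_congr rfl fun x _ => this x, Finset.sum_sub_distrib,
    Finset.sum_ite_eq' Finset.univ (a:K) (fun _ => (c a : ℤ)), quadraticChar_sum_zero hK]
  simp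

private lemma tpV11 (a : K) (ha : a ≠ 0) :
    ∑ x : K, (c x : ℤ)^2 * (c (x - a))^2 = Fintype.card K - 2 := by
  have : ∀ x : K, (c x : ℤ)^2 * (c (x - a))^2
      = 1 - (if x = 0 then 1 else 0) - (if x = a then 1 else 0) := by
    intro x
    rw [tpV_sq, tpV_sq]
    by_cases h : x = 0
    · simp [h, sub_eq_zero, Ne.symm ha]
    · by_cases h2 : x = a <;> simp [h, h2, sub_eq_zero, ha]
  rw [Finset.sum_congr rfl fun x _ => this x, Finset.sum_sub_distrib, Finset.sum_sub_distrib,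
    Finset.sum_ite_eq' Finset.univ (0:K) (fun _ => (1:ℤ)),
    Finset.sum_ite_eq' Finset.univ (a:K) (fun _ => (1:ℤ))]
  simp; ring

private lemma tpV8 (hK : ringChar K ≠ 2) (a : K) (ha : a ≠ 0) :
    ∑ x : K, (c x : ℤ) * c (x - a) = -1 := by
  have key : ∀ x : K, (c x : ℤ) * c (x - a) = if x = 0 then 0 else c (1 - a * x⁻¹) := by
    intro x
    by_cases h : x = 0
    · simp [h]
    · rw [if_neg h]
      have hx : x - a = x * (1 - a * x⁻¹) := by field_simp
      rw [hx, map_mul, ← mul_assoc, ← sq, quadraticChar_sq_one h, one_mul]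
  have key2 : ∀ x : K, (if x = 0 then 0 else (c (1 - a * x⁻¹) : ℤ))
      = c (1 - a * x⁻¹) - (if x = 0 then 1 else 0) := by
    intro x
    by_cases h : x = 0
    · simp [h]
    · simp [h]
  rw [Finset.sum_congr rfl fun x _ => (key x).trans (key2 x), Finset.sum_sub_distrib,
    Finset.sum_ite_eq' Finset.univ (0:K) (fun _ => (1:ℤ))]
  have hbij : Function.Bijective (fun x : K => 1 - a * x⁻¹) := by
    rw [Function.bijective_iff_has_inverse]
    refine ⟨fun u => a * (1 - u)⁻¹, fun x => ?_, fun u => ?_⟩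
    · by_cases h : x = 0
      · simp [h]
      · field_simp
        rw [sub_sub_cancel, div_self ha]
    · by_cases h : u = 1
      · simp [h]
      · have h1 : (1:K) - u ≠ 0 := sub_ne_zero.mpr (fun e => h e.symm)
        field_simp
        ring
  rw [Fintype.sum_bijective _ hbij (fun x => (c (1 - a * x⁻¹) : ℤ)) (fun u => (c u : ℤ))
    (fun x => rfl), quadraticChar_sum_zero hK]
  simp

private lemma tp_sq_iff (x : K) : (∃ w : K, w ≠ 0 ∧ x = w^2) ↔ c x = 1 := by
  constructor
  · rintro ⟨w, hw, rfl⟩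
    rw [map_pow, quadraticChar_sq_one hw]
  · intro h
    by_cases hx : x = 0
    · rw [quadraticChar_eq_zero_iff.mpr hx] at h; norm_num at h
    · obtain ⟨r, hr⟩ := (quadraticChar_one_iff_isSquare hx).mp h
      exact ⟨r, fun h0 => hx (by rw [hr, h0, mul_zero]), by rw [hr, pow_two]⟩
 
private lemma tp_nsq_iff (x : K) : (x ≠ 0 ∧ ¬ ∃ w : K, x = w^2) ↔ c x = -1 := by
  constructor
  · rintro ⟨hx, hns⟩
    exact quadraticChar_neg_one_iff_not_isSquare.mpr
      (fun ⟨r, hr⟩ => hns ⟨r, by rw [hr, pow_two]⟩)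
  · intro h
    have hx : x ≠ 0 := by
      intro e
      rw [quadraticChar_eq_zero_iff.mpr e] at h; norm_num at h
    refine ⟨hx, fun ⟨w, hw⟩ => ?_⟩
    exact absurd ⟨w, by rw [hw, pow_two]⟩ (quadraticChar_neg_one_iff_not_isSquare.mp h)

private lemma tp_sum_e_mul (g : K → ℤ) :
    ∑ y : K, (if y = 0 then (1:ℤ) else 0) * g y = g 0 := by
  have : ∀ y : K, (if y = 0 then (1:ℤ) else 0) * g y = if y = 0 then g y else 0 := by
    intro y; split <;> ring
  rw [Finset.sum_congr rfl fun y _ => this y, Finset.sum_ite_eq' Finset.univ (0:K) g]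
  simp

private lemma tp_sum_mul_e (g : K → ℤ) (b : K) :
    ∑ y : K, g y * (if y - b = 0 then (1:ℤ) else 0) = g b := by
  have : ∀ y : K, g y * (if y - b = 0 then (1:ℤ) else 0) = if y = b then g y else 0 := by
    intro y
    by_cases h : y = b
    · simp [h]
    · simp [h, sub_ne_zero.mpr h]
  rw [Finset.sum_congr rfl fun y _ => this y, Finset.sum_ite_eq' Finset.univ (b:K) g]
  simp

end TwinAux

private lemma tp_sum3 {A B : Type} [Fintype A] [Fintype B]
    (p1 p2 p3 P1 P2 P3 : A → ℤ) (q1 q2 q3 Q1 Q2 Q3 : B → ℤ) :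
    ∑ x : A, ∑ y : B,
      (p1 x * q1 y + p2 x * q2 y + p3 x * q3 y) *
      (P1 x * Q1 y + P2 x * Q2 y + P3 x * Q3 y) =
    (∑ x, p1 x * P1 x) * (∑ y, q1 y * Q1 y) + (∑ x, p1 x * P2 x) * (∑ y, q1 y * Q2 y) +
    (∑ x, p1 x * P3 x) * (∑ y, q1 y * Q3 y) +
    (∑ x, p2 x * P1 x) * (∑ y, q2 y * Q1 y) + (∑ x, p2 x * P2 x) * (∑ y, q2 y * Q2 y) +
    (∑ x, p2 x * P3 x) * (∑ y, q2 y * Q3 y) +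
    (∑ x, p3 x * P1 x) * (∑ y, q3 y * Q1 y) + (∑ x, p3 x * P2 x) * (∑ y, q3 y * Q2 y) +
    (∑ x, p3 x * P3 x) * (∑ y, q3 y * Q3 y) := by
  simp only [Finset.sum_mul_sum, ← Finset.sum_add_distrib]
  apply Finset.sum_congr rfl
  intro x _
  apply Finset.sum_congr rfl
  intro y _
  ring

private lemma tp_sum1 {A B : Type} [Fintype A] [Fintype B]
    (p1 p2 p3 : A → ℤ) (q1 q2 q3 : B → ℤ) :
    ∑ x : A, ∑ y : B, (p1 x * q1 y + p2 x * q2 y + p3 x * q3 y) =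
    (∑ x, p1 x) * (∑ y, q1 y) + (∑ x, p2 x) * (∑ y, q2 y) + (∑ x, p3 x) * (∑ y, q3 y) := by
  simp only [Finset.sum_mul_sum, ← Finset.sum_add_distrib]

/-- Twin prime difference set: for `p` and `p+2` both prime with `p` odd, the
set of pairs `(x, y) ∈ F_p × F_{p+2}` such that `x` and `y` are both nonzero
squares, or both nonsquares, or `y = 0`, is a difference set with parameters
`(p² + 2p, (p² + 2p − 1)/2, (p² + 2p − 3)/4)` in `ℤ/pℤ × ℤ/(p+2)ℤ`. -/
theorem twin_prime_difference_set (p : ℕ) [Fact p.Prime] [Fact (p + 2).Prime]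
    (hp : Odd p) :
    let B : Finset (ZMod p × ZMod (p + 2)) :=
      Finset.univ.filter (fun z =>
        ((∃ w : ZMod p, w ≠ 0 ∧ z.1 = w ^ 2) ∧
          (∃ w : ZMod (p + 2), w ≠ 0 ∧ z.2 = w ^ 2)) ∨
        ((z.1 ≠ 0 ∧ ¬ ∃ w : ZMod p, z.1 = w ^ 2) ∧
          (z.2 ≠ 0 ∧ ¬ ∃ w : ZMod (p + 2), z.2 = w ^ 2)) ∨
        z.2 = 0)
    B.card = (p ^ 2 + 2 * p - 1) / 2 ∧
    ∀ d : ZMod p × ZMod (p + 2), d ≠ 0 →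
      ((B ×ˢ B).filter (fun q => q.1 ≠ q.2 ∧ q.1 - q.2 = d)).card
        = (p ^ 2 + 2 * p - 3) / 4 := by
  intro B
  have hpodd : p % 2 = 1 := Nat.odd_iff.mp hp
  have hp1 : 1 ≤ p := Nat.one_le_iff_ne_zero.mpr (by omega)
  have hchar1 : ringChar (ZMod p) ≠ 2 := by
    rw [ZMod.ringChar_zmod_n]; omega
  have hchar2 : ringChar (ZMod (p + 2)) ≠ 2 := by
    rw [ZMod.ringChar_zmod_n]; omega
  set χ := quadraticChar (ZMod p) with hχdef
  set ψ := quadraticChar (ZMod (p + 2)) with hψdef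
  have hB : ∀ z : ZMod p × ZMod (p + 2), z ∈ B ↔
      ((χ z.1 = 1 ∧ ψ z.2 = 1) ∨ (χ z.1 = -1 ∧ ψ z.2 = -1) ∨ z.2 = 0) := by
    intro z
    simp only [B, Finset.mem_filter, Finset.mem_univ, true_and]
    rw [tp_sq_iff, tp_sq_iff, tp_nsq_iff, tp_nsq_iff]
  -- the indicator identity
  have hmem : ∀ z : ZMod p × ZMod (p + 2),
      (if z ∈ B then (2:ℤ) else 0) =
        (1:ℤ) * (2 * (if z.2 = 0 then 1 else 0)) + (χ z.1)^2 * (ψ z.2)^2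
          + χ z.1 * ψ z.2 := by
    intro z
    by_cases h2 : z.2 = 0
    · rw [if_pos ((hB z).mpr (Or.inr (Or.inr h2))), h2, if_pos rfl,
        quadraticChar_eq_zero_iff.mpr rfl]
      ring
    · rw [if_neg h2]
      by_cases h1 : z.1 = 0
      · have hχ0 : χ z.1 = 0 := quadraticChar_eq_zero_iff.mpr h1
        have hnot : z ∉ B := by
          rw [hB]
          rintro (⟨e1, _⟩ | ⟨e1, _⟩ | e3)
          · rw [hχ0] at e1; norm_num at e1
          · rw [hχ0] at e1; norm_num at e1
          · exact h2 e3
        rw [if_neg hnot, hχ0]; ring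
      · rcases quadraticChar_dichotomy h1 with hχ | hχ <;>
          rcases quadraticChar_dichotomy h2 with hψ | hψ
        · rw [if_pos ((hB z).mpr (Or.inl ⟨hχ, hψ⟩)), hχ, hψ]; ring
        · have hnot : z ∉ B := by
            rw [hB]
            rintro (⟨_, e2⟩ | ⟨e1, _⟩ | e3)
            · rw [hψ] at e2; norm_num at e2
            · rw [hχ] at e1; norm_num at e1
            · exact h2 e3
          rw [if_neg hnot, hχ, hψ]; ring
        · have hnot : z ∉ B := by
            rw [hB]
            rintro (⟨e1, _⟩ | ⟨_, e2⟩ | e3)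
            · rw [hχ] at e1; norm_num at e1
            · rw [hψ] at e2; norm_num at e2
            · exact h2 e3
          rw [if_neg hnot, hχ, hψ]; ring
        · rw [if_pos ((hB z).mpr (Or.inr (Or.inl ⟨hχ, hψ⟩))), hχ, hψ]; ring
  have hcardp : (Fintype.card (ZMod p) : ℤ) = p := by rw [ZMod.card]
  have hcardp2 : (Fintype.card (ZMod (p + 2)) : ℤ) = (p : ℤ) + 2 := by
    rw [ZMod.card]; push_cast; ring
  -- Part 1 : cardinality of B
  have part1 : (2:ℤ) * B.card = 2 * (p:ℤ) + ((p:ℤ) - 1) * ((p:ℤ) + 1) := by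
    have h0 : (2:ℤ) * B.card = ∑ z : ZMod p × ZMod (p + 2), (if z ∈ B then (2:ℤ) else 0) := by
      rw [Finset.sum_ite_mem, Finset.univ_inter, Finset.sum_const, nsmul_eq_mul, mul_comm]
    rw [h0, Fintype.sum_prod_type]
    have h1 : ∀ x : ZMod p, ∀ y : ZMod (p + 2),
        (if ((x, y) : ZMod p × ZMod (p+2)) ∈ B then (2:ℤ) else 0) =
        (1:ℤ) * (2 * (if y = 0 then 1 else 0)) + (χ x)^2 * (ψ y)^2 + χ x * ψ y := by
      intro x y; exact hmem (x, y)
    rw [Finset.sum_congr rfl fun x _ => Finset.sum_congr rfl fun y _ => h1 x y,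
      tp_sum1 (fun _ => (1:ℤ)) (fun x => (χ x : ℤ)^2) (fun x => (χ x : ℤ))
        (fun y => 2 * (if y = 0 then (1:ℤ) else 0)) (fun y => (ψ y : ℤ)^2)
        (fun y => (ψ y : ℤ))]
    rw [quadraticChar_sum_zero hchar1, tpV3, tpV3]
    have he : ∑ y : ZMod (p + 2), 2 * (if y = 0 then (1:ℤ) else 0) = 2 := by
      rw [← Finset.mul_sum, Finset.sum_ite_eq' Finset.univ (0 : ZMod (p+2)) (fun _ => (1:ℤ))]
      simp
    rw [he]
    simp only [Finset.sum_const, Finset.card_univ, nsmul_eq_mul, mul_one]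
    rw [hcardp, hcardp2]
    ring
  refine ⟨?_, ?_⟩
  · -- cardinality
    have h2 : 2 * B.card = p ^ 2 + 2 * p - 1 := by
      have : (2 * B.card : ℤ) = ((p:ℤ)^2 + 2 * p) - 1 := by push_cast; linarith [part1]
      have hge : 1 ≤ p ^ 2 + 2 * p := by nlinarith
      have : (2 * B.card : ℤ) = ((p ^ 2 + 2 * p - 1 : ℕ) : ℤ) := by
        rw [this]; push_cast [hge]; ring
      exact_mod_cast this
    omega
  · -- difference counts
    intro d hd
    set N := ((B ×ˢ B).filter (fun q => q.1 ≠ q.2 ∧ q.1 - q.2 = d)).card with hNdef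
    -- step 1: identify with a one-variable count
    have step1 : (Finset.univ.filter (fun z : ZMod p × ZMod (p+2) =>
        z ∈ B ∧ z - d ∈ B)).card = N := by
      apply Finset.card_bij' (fun z _ => (z, z - d)) (fun q _ => q.1)
      · intro z hz
        simp only [Finset.mem_filter, Finset.mem_univ, true_and] at hz
        rw [Finset.mem_filter, Finset.mem_product]
        refine ⟨⟨hz.1, hz.2⟩, ?_, sub_sub_cancel z d⟩
        intro e
        exact hd (sub_eq_self.mp e.symm)
      · intro q hq
        rw [Finset.mem_filter, Finset.mem_product] at hq
        rw [Finset.mem_filter]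
        refine ⟨Finset.mem_univ _, hq.1.1, ?_⟩
        rw [← hq.2.2, sub_sub_cancel]
        exact hq.1.2
      · intro a _; rfl
      · intro q hq
        rw [Finset.mem_filter, Finset.mem_product] at hq
        have : q.1 - d = q.2 := by rw [← hq.2.2, sub_sub_cancel]
        rw [this]
      -- step 2: as an integer sum
    have step2 : (4 : ℤ) * N = ∑ z : ZMod p × ZMod (p+2),
        (if z ∈ B then (2:ℤ) else 0) * (if z - d ∈ B then (2:ℤ) else 0) := by
      rw [← step1]
      rw [← Finset.sum_boole]
      rw [Finset.mul_sum]
      apply Finset.sum_congr rfl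
      intro z _
      by_cases h1 : z ∈ B <;> by_cases h2 : z - d ∈ B <;>
        simp [h1, h2]
    -- step 3: expand
    have hsub1 : ∀ (x : ZMod p) (y : ZMod (p+2)),
        ((x, y) : ZMod p × ZMod (p+2)) - d = (x - d.1, y - d.2) := by
      intro x y; rfl
    have step3 : (4 : ℤ) * N =
      (∑ x : ZMod p, (1:ℤ) * 1) *
        (∑ y : ZMod (p+2), (2 * (if y = 0 then (1:ℤ) else 0)) * (2 * (if y - d.2 = 0 then 1 else 0))) +
      (∑ x : ZMod p, (1:ℤ) * (χ (x - d.1))^2) *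
        (∑ y : ZMod (p+2), (2 * (if y = 0 then (1:ℤ) else 0)) * (ψ (y - d.2))^2) +
      (∑ x : ZMod p, (1:ℤ) * (χ (x - d.1) : ℤ)) *
        (∑ y : ZMod (p+2), (2 * (if y = 0 then (1:ℤ) else 0)) * ψ (y - d.2)) +
      (∑ x : ZMod p, (χ x : ℤ)^2 * 1) *
        (∑ y : ZMod (p+2), (ψ y : ℤ)^2 * (2 * (if y - d.2 = 0 then 1 else 0))) +
      (∑ x : ZMod p, (χ x : ℤ)^2 * (χ (x - d.1))^2) *
        (∑ y : ZMod (p+2), (ψ y : ℤ)^2 * (ψ (y - d.2))^2) +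
      (∑ x : ZMod p, (χ x : ℤ)^2 * χ (x - d.1)) *
        (∑ y : ZMod (p+2), (ψ y : ℤ)^2 * ψ (y - d.2)) +
      (∑ x : ZMod p, (χ x : ℤ) * 1) *
        (∑ y : ZMod (p+2), (ψ y : ℤ) * (2 * (if y - d.2 = 0 then 1 else 0))) +
      (∑ x : ZMod p, (χ x : ℤ) * (χ (x - d.1))^2) *
        (∑ y : ZMod (p+2), (ψ y : ℤ) * (ψ (y - d.2))^2) +
      (∑ x : ZMod p, (χ x : ℤ) * χ (x - d.1)) *
        (∑ y : ZMod (p+2), (ψ y : ℤ) * ψ (y - d.2)) := by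
      rw [step2, Fintype.sum_prod_type]
      have hpt : ∀ (x : ZMod p) (y : ZMod (p+2)),
          (if ((x, y) : ZMod p × ZMod (p+2)) ∈ B then (2:ℤ) else 0) *
            (if ((x, y) : ZMod p × ZMod (p+2)) - d ∈ B then (2:ℤ) else 0) =
          ((1:ℤ) * (2 * (if y = 0 then 1 else 0)) + (χ x)^2 * (ψ y)^2 + χ x * ψ y) *
          ((1:ℤ) * (2 * (if y - d.2 = 0 then 1 else 0)) + (χ (x - d.1))^2 * (ψ (y - d.2))^2
            + χ (x - d.1) * ψ (y - d.2)) := by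
        intro x y
        rw [hmem (x, y), hsub1 x y, hmem (x - d.1, y - d.2)]
      rw [Finset.sum_congr rfl fun x _ => Finset.sum_congr rfl fun y _ => hpt x y]
      exact tp_sum3 (fun _ => (1:ℤ)) (fun x => (χ x : ℤ)^2) (fun x => (χ x : ℤ))
          (fun _ => (1:ℤ)) (fun x => (χ (x - d.1) : ℤ)^2) (fun x => (χ (x - d.1) : ℤ))
          (fun y => 2 * (if y = 0 then (1:ℤ) else 0)) (fun y => (ψ y : ℤ)^2)
          (fun y => (ψ y : ℤ))
          (fun y => 2 * (if y - d.2 = 0 then (1:ℤ) else 0)) (fun y => (ψ (y - d.2) : ℤ)^2)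
          (fun y => (ψ (y - d.2) : ℤ))
    -- X-sums that do not depend on cases
    have hX11 : ∑ _x : ZMod p, (1:ℤ) * 1 = (p : ℤ) := by simp [ZMod.card]
    have hX12 : ∑ x : ZMod p, (1:ℤ) * (χ (x - d.1) : ℤ)^2 = (p:ℤ) - 1 := by
      simp only [one_mul]
      rw [tpVshift (fun x => (χ x : ℤ)^2) d.1, tpV3, hcardp]
    have hX13 : ∑ x : ZMod p, (1:ℤ) * (χ (x - d.1) : ℤ) = 0 := by
      simp only [one_mul]; exact tpV12 hchar1 d.1
    have hX21 : ∑ x : ZMod p, (χ x : ℤ)^2 * 1 = (p:ℤ) - 1 := by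
      simp only [mul_one]; rw [tpV3, hcardp]
    have hX31 : ∑ x : ZMod p, (χ x : ℤ) * 1 = 0 := by
      simp only [mul_one]; exact quadraticChar_sum_zero hchar1
    -- the sign relation
    have hm1 : (χ (-1) : ℤ) * ψ (-1) = -1 := by
      rw [hχdef, hψdef, quadraticChar_neg_one hchar1, quadraticChar_neg_one hchar2,
        ZMod.card, ZMod.card]
      have h4 : p % 4 = 1 ∨ p % 4 = 3 := by omega
      rcases h4 with h4 | h4
      · rw [ZMod.χ₄_nat_one_mod_four h4,
          ZMod.χ₄_nat_three_mod_four (by omega : (p + 2) % 4 = 3)]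
        norm_num
      · rw [ZMod.χ₄_nat_three_mod_four h4,
          ZMod.χ₄_nat_one_mod_four (by omega : (p + 2) % 4 = 1)]
        norm_num
    have hfinal : (4:ℤ) * N = (p:ℤ)^2 + 2*p - 3 := by
      by_cases hd2 : d.2 = 0
      · -- case C : d.2 = 0, d.1 ≠ 0
        have hd1 : d.1 ≠ 0 := fun h1 => hd (Prod.ext_iff.mpr ⟨h1, hd2⟩)
        rw [step3]
        simp only [hd2, sub_zero]
        have hY11 : ∑ y : ZMod (p+2), (2 * (if y = 0 then (1:ℤ) else 0)) *
            (2 * (if y = 0 then 1 else 0)) = 4 := by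
          have h : ∀ y : ZMod (p+2), (2 * (if y = 0 then (1:ℤ) else 0)) *
              (2 * (if y = 0 then 1 else 0)) = (if y = 0 then (1:ℤ) else 0) * 4 := by
            intro y; split <;> ring
          rw [Finset.sum_congr rfl fun y _ => h y, tp_sum_e_mul (fun _ => (4:ℤ))]
        have hψ0 : (ψ 0 : ℤ) = 0 := quadraticChar_eq_zero_iff.mpr rfl
        have hY12 : ∑ y : ZMod (p+2), (2 * (if y = 0 then (1:ℤ) else 0)) * (ψ y : ℤ)^2 = 0 := by
          have h : ∀ y : ZMod (p+2), (2 * (if y = 0 then (1:ℤ) else 0)) * (ψ y : ℤ)^2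
              = (if y = 0 then (1:ℤ) else 0) * (2 * (ψ y : ℤ)^2) := fun y => by ring
          rw [Finset.sum_congr rfl fun y _ => h y,
            tp_sum_e_mul (fun y => 2 * (ψ y : ℤ)^2), hψ0]
          ring
        have hY21 : ∑ y : ZMod (p+2), (ψ y : ℤ)^2 * (2 * (if y = 0 then (1:ℤ) else 0)) = 0 := by
          have h : ∀ y : ZMod (p+2), (ψ y : ℤ)^2 * (2 * (if y = 0 then (1:ℤ) else 0))
              = (if y = 0 then (1:ℤ) else 0) * (2 * (ψ y : ℤ)^2) := fun y => by ring
          rw [Finset.sum_congr rfl fun y _ => h y,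
            tp_sum_e_mul (fun y => 2 * (ψ y : ℤ)^2), hψ0]
          ring
        have hY22 : ∑ y : ZMod (p+2), (ψ y : ℤ)^2 * (ψ y : ℤ)^2 = (p:ℤ) + 1 := by
          have h : ∀ y : ZMod (p+2), (ψ y : ℤ)^2 * (ψ y : ℤ)^2 = (ψ y : ℤ)^2 := by
            intro y
            rcases eq_or_ne y 0 with h0 | h0
            · rw [h0, hψ0]; ring
            · rw [quadraticChar_sq_one h0]; ring
          rw [Finset.sum_congr rfl fun y _ => h y, tpV3, hcardp2]
          ring
        have hY23 : ∑ y : ZMod (p+2), (ψ y : ℤ)^2 * (ψ y : ℤ) = 0 := tpV4 hchar2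
        have hY32 : ∑ y : ZMod (p+2), (ψ y : ℤ) * (ψ y : ℤ)^2 = 0 := by
          have h : ∀ y : ZMod (p+2), (ψ y : ℤ) * (ψ y : ℤ)^2 = (ψ y : ℤ)^2 * ψ y :=
            fun y => by ring
          rw [Finset.sum_congr rfl fun y _ => h y]; exact tpV4 hchar2
        have hY33 : ∑ y : ZMod (p+2), (ψ y : ℤ) * (ψ y : ℤ) = (p:ℤ) + 1 := by
          have h : ∀ y : ZMod (p+2), (ψ y : ℤ) * (ψ y : ℤ) = (ψ y : ℤ)^2 := fun y => by ring
          rw [Finset.sum_congr rfl fun y _ => h y, tpV3, hcardp2]; ring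
        have hX22 : ∑ x : ZMod p, (χ x : ℤ)^2 * (χ (x - d.1) : ℤ)^2 = (p:ℤ) - 2 := by
          rw [tpV11 d.1 hd1, hcardp]
        have hX33 : ∑ x : ZMod p, (χ x : ℤ) * (χ (x - d.1) : ℤ) = -1 := tpV8 hchar1 d.1 hd1
        rw [hX11, hX12, hX13, hX21, hX31, hY11, hY12, hY21, hY22, hY23, hY32, hY33,
          hX22, hX33]
        ring
      · by_cases hd1 : d.1 = 0
        · -- case B : d.1 = 0, d.2 ≠ 0
          rw [step3]
          simp only [hd1, sub_zero]
          have hY11 : ∑ y : ZMod (p+2), (2 * (if y = 0 then (1:ℤ) else 0)) *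
              (2 * (if y - d.2 = 0 then 1 else 0)) = 0 := by
            have h : ∀ y : ZMod (p+2), (2 * (if y = 0 then (1:ℤ) else 0)) *
                (2 * (if y - d.2 = 0 then 1 else 0))
                = (if y = 0 then (1:ℤ) else 0) * (4 * (if y - d.2 = 0 then 1 else 0)) :=
              fun y => by ring
            rw [Finset.sum_congr rfl fun y _ => h y,
              tp_sum_e_mul (fun y => 4 * (if y - d.2 = 0 then (1:ℤ) else 0)),
              if_neg (fun h => hd2 (by rwa [zero_sub, neg_eq_zero] at h))]
            ring
          have hY12 : ∑ y : ZMod (p+2), (2 * (if y = 0 then (1:ℤ) else 0)) *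
              (ψ (y - d.2) : ℤ)^2 = 2 := by
            have h : ∀ y : ZMod (p+2), (2 * (if y = 0 then (1:ℤ) else 0)) * (ψ (y - d.2) : ℤ)^2
                = (if y = 0 then (1:ℤ) else 0) * (2 * (ψ (y - d.2) : ℤ)^2) := fun y => by ring
            rw [Finset.sum_congr rfl fun y _ => h y,
              tp_sum_e_mul (fun y => 2 * (ψ (y - d.2) : ℤ)^2), zero_sub,
              quadraticChar_sq_one (neg_ne_zero.mpr hd2)]
            ring
          have hY21 : ∑ y : ZMod (p+2), (ψ y : ℤ)^2 *
              (2 * (if y - d.2 = 0 then (1:ℤ) else 0)) = 2 := by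
            have h : ∀ y : ZMod (p+2), (ψ y : ℤ)^2 * (2 * (if y - d.2 = 0 then (1:ℤ) else 0))
                = ((ψ y : ℤ)^2 * 2) * (if y - d.2 = 0 then (1:ℤ) else 0) := fun y => by ring
            rw [Finset.sum_congr rfl fun y _ => h y,
              tp_sum_mul_e (fun y => (ψ y : ℤ)^2 * 2) d.2, quadraticChar_sq_one hd2]
            ring
          have hY22 : ∑ y : ZMod (p+2), (ψ y : ℤ)^2 * (ψ (y - d.2) : ℤ)^2 = (p:ℤ) := by
            rw [tpV11 d.2 hd2, hcardp2]; ring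
          have hY33 : ∑ y : ZMod (p+2), (ψ y : ℤ) * (ψ (y - d.2) : ℤ) = -1 :=
            tpV8 hchar2 d.2 hd2
          have hA1 : ∑ x : ZMod p, (χ x : ℤ)^2 * (χ x : ℤ)^2 = (p:ℤ) - 1 := by
            have h : ∀ x : ZMod p, (χ x : ℤ)^2 * (χ x : ℤ)^2 = (χ x : ℤ)^2 := by
              intro x
              rcases eq_or_ne x 0 with h0 | h0
              · rw [h0, quadraticChar_eq_zero_iff.mpr rfl]; ring
              · rw [quadraticChar_sq_one h0]; ring
            rw [Finset.sum_congr rfl fun x _ => h x, tpV3, hcardp]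
          have hA2 : ∑ x : ZMod p, (χ x : ℤ)^2 * (χ x : ℤ) = 0 := tpV4 hchar1
          have hA3 : ∑ x : ZMod p, (χ x : ℤ) * (χ x : ℤ)^2 = 0 := by
            have h : ∀ x : ZMod p, (χ x : ℤ) * (χ x : ℤ)^2 = (χ x : ℤ)^2 * χ x :=
              fun x => by ring
            rw [Finset.sum_congr rfl fun x _ => h x]; exact tpV4 hchar1
          have hA4 : ∑ x : ZMod p, (χ x : ℤ) * (χ x : ℤ) = (p:ℤ) - 1 := by
            have h : ∀ x : ZMod p, (χ x : ℤ) * (χ x : ℤ) = (χ x : ℤ)^2 := fun x => by ring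
            rw [Finset.sum_congr rfl fun x _ => h x, tpV3, hcardp]
          have hB12 : ∑ x : ZMod p, (1:ℤ) * (χ x : ℤ)^2 = (p:ℤ) - 1 := by
            simp only [one_mul]; rw [tpV3, hcardp]
          have hB13 : ∑ x : ZMod p, (1:ℤ) * (χ x : ℤ) = 0 := by
            simp only [one_mul]; exact quadraticChar_sum_zero hchar1
          rw [hX11, hB12, hB13, hX21, hX31, hY11, hY12, hY21, hY22, hY33, hA1, hA2, hA3, hA4]
          ring
        · -- case A : d.1 ≠ 0, d.2 ≠ 0
          rw [step3]
          have hY11 : ∑ y : ZMod (p+2), (2 * (if y = 0 then (1:ℤ) else 0)) *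
              (2 * (if y - d.2 = 0 then 1 else 0)) = 0 := by
            have h : ∀ y : ZMod (p+2), (2 * (if y = 0 then (1:ℤ) else 0)) *
                (2 * (if y - d.2 = 0 then 1 else 0))
                = (if y = 0 then (1:ℤ) else 0) * (4 * (if y - d.2 = 0 then 1 else 0)) :=
              fun y => by ring
            rw [Finset.sum_congr rfl fun y _ => h y,
              tp_sum_e_mul (fun y => 4 * (if y - d.2 = 0 then (1:ℤ) else 0)),
              if_neg (fun h => hd2 (by rwa [zero_sub, neg_eq_zero] at h))]
            ring
          have hY12 : ∑ y : ZMod (p+2), (2 * (if y = 0 then (1:ℤ) else 0)) *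
              (ψ (y - d.2) : ℤ)^2 = 2 := by
            have h : ∀ y : ZMod (p+2), (2 * (if y = 0 then (1:ℤ) else 0)) * (ψ (y - d.2) : ℤ)^2
                = (if y = 0 then (1:ℤ) else 0) * (2 * (ψ (y - d.2) : ℤ)^2) := fun y => by ring
            rw [Finset.sum_congr rfl fun y _ => h y,
              tp_sum_e_mul (fun y => 2 * (ψ (y - d.2) : ℤ)^2), zero_sub,
              quadraticChar_sq_one (neg_ne_zero.mpr hd2)]
            ring
          have hY21 : ∑ y : ZMod (p+2), (ψ y : ℤ)^2 *
              (2 * (if y - d.2 = 0 then (1:ℤ) else 0)) = 2 := by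
            have h : ∀ y : ZMod (p+2), (ψ y : ℤ)^2 * (2 * (if y - d.2 = 0 then (1:ℤ) else 0))
                = ((ψ y : ℤ)^2 * 2) * (if y - d.2 = 0 then (1:ℤ) else 0) := fun y => by ring
            rw [Finset.sum_congr rfl fun y _ => h y,
              tp_sum_mul_e (fun y => (ψ y : ℤ)^2 * 2) d.2, quadraticChar_sq_one hd2]
            ring
          have hY22 : ∑ y : ZMod (p+2), (ψ y : ℤ)^2 * (ψ (y - d.2) : ℤ)^2 = (p:ℤ) := by
            rw [tpV11 d.2 hd2, hcardp2]; ring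
          have hY23 : ∑ y : ZMod (p+2), (ψ y : ℤ)^2 * (ψ (y - d.2) : ℤ) = -(ψ (-d.2)) :=
            tpV9 hchar2 d.2
          have hY32 : ∑ y : ZMod (p+2), (ψ y : ℤ) * (ψ (y - d.2) : ℤ)^2 = -(ψ d.2) :=
            tpV10 hchar2 d.2
          have hY33 : ∑ y : ZMod (p+2), (ψ y : ℤ) * (ψ (y - d.2) : ℤ) = -1 :=
            tpV8 hchar2 d.2 hd2
          have hX22 : ∑ x : ZMod p, (χ x : ℤ)^2 * (χ (x - d.1) : ℤ)^2 = (p:ℤ) - 2 := by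
            rw [tpV11 d.1 hd1, hcardp]
          have hX23 : ∑ x : ZMod p, (χ x : ℤ)^2 * (χ (x - d.1) : ℤ) = -(χ (-d.1)) :=
            tpV9 hchar1 d.1
          have hX32 : ∑ x : ZMod p, (χ x : ℤ) * (χ (x - d.1) : ℤ)^2 = -(χ d.1) :=
            tpV10 hchar1 d.1
          have hX33 : ∑ x : ZMod p, (χ x : ℤ) * (χ (x - d.1) : ℤ) = -1 :=
            tpV8 hchar1 d.1 hd1
          rw [hX11, hX12, hX13, hX21, hX31, hY11, hY12, hY21, hY22, hY23, hY32, hY33,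
            hX22, hX23, hX32, hX33]
          have hneg : (χ (-d.1) : ℤ) * ψ (-d.2) = -((χ d.1 : ℤ) * ψ d.2) := by
            have e1 : (-d.1 : ZMod p) = (-1) * d.1 := by ring
            have e2 : (-d.2 : ZMod (p+2)) = (-1) * d.2 := by ring
            rw [e1, e2, map_mul, map_mul]
            linear_combination ((χ d.1 : ℤ) * ψ d.2) * hm1
          linear_combination hneg
    have hge : 3 ≤ p ^ 2 + 2 * p := by nlinarith
    have hZ : ((4 * N : ℕ) : ℤ) = ((p ^ 2 + 2 * p - 3 : ℕ) : ℤ) := by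
      push_cast [hge]
      linarith [hfinal]
    have hN4 : 4 * N = p ^ 2 + 2 * p - 3 := Nat.cast_injective hZ
    generalize hs : p ^ 2 + 2 * p = s at hN4 ⊢
    omega
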